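/- In a median graph G, let X be a POF and v a vertex such that, for each Θ-class E_i ∈ X, there is an edge of E_i incident to v. Then there exists an induced subgraph Q of G isomorphic to the hypercube Q_{|X|} which contains v and all the edges of classes of X incident to v, and the set of Θ-classes of the edges of Q is exactly X. -/

import Mathlib

namespace MedianPaper

variable {V : Type*}

/-- The metric interval `I(u,v)`: vertices on shortest `(u,v)`-paths. -/
def interval (G : SimpleGraph V) (u v : V) : Set V :=
  {w | G.dist u w + G.dist w v = G.dist u v}

/-- A median graph: a connected graph in which every triple of vertices
has a unique median. -/
def MedianGraph (G : SimpleGraph V) : Prop :=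
  G.Connected ∧ ∀ x y z : V, ∃! m : V,
    m ∈ interval G x y ∧ m ∈ interval G y z ∧ m ∈ interval G z x

/-- `u v x y` span a 4-cycle `u-v-y-x-u`, with opposite edge pairs
`(uv, xy)` and `(ux, vy)`. -/
def IsSquare (G : SimpleGraph V) (u v x y : V) : Prop :=
  G.Adj u v ∧ G.Adj x y ∧ G.Adj u x ∧ G.Adj v y ∧ u ≠ y ∧ v ≠ x

/-- Two edges are in relation Θ₀ if they are opposite edges of a common 4-cycle. -/
def Theta0 (G : SimpleGraph V) (e f : Sym2 V) : Prop :=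
  ∃ u v x y : V, IsSquare G u v x y ∧ e = s(u, v) ∧ f = s(x, y)

/-- Θ : the reflexive-transitive closure of Θ₀ on the edges of `G`. -/
def Theta (G : SimpleGraph V) (e f : Sym2 V) : Prop :=
  e ∈ G.edgeSet ∧ f ∈ G.edgeSet ∧ Relation.ReflTransGen (Theta0 G) e f

/-- The Θ-classes of `G`: equivalence classes of edges under Θ. -/
def ThetaClass (G : SimpleGraph V) (C : Set (Sym2 V)) : Prop :=
  ∃ e ∈ G.edgeSet, C = {f | Theta G e f}

/-- The edge set `C` separates `u` from `v` : they lie in different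
components of `G` minus `C`. -/
def Separates (G : SimpleGraph V) (C : Set (Sym2 V)) (u v : V) : Prop :=
  ¬ (G.deleteEdges C).Reachable u v

/-- The signature `σ_{u,v}`: Θ-classes separating `u` from `v`. -/
def signature (G : SimpleGraph V) (u v : V) : Set (Set (Sym2 V)) :=
  {C | ThetaClass G C ∧ Separates G C u v}

/-- `H`, `H'` are the two connected components (halfspaces) of `G` deprived
of the edges in `C`. -/
def IsHalfspacePair (G : SimpleGraph V) (C : Set (Sym2 V)) (H H' : Set V) : Prop :=
  H.Nonempty ∧ H'.Nonempty ∧ Disjoint H H' ∧ H ∪ H' = Set.univ ∧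
  (∀ x ∈ H, ∀ y ∈ H, (G.deleteEdges C).Reachable x y) ∧
  (∀ x ∈ H', ∀ y ∈ H', (G.deleteEdges C).Reachable x y) ∧
  (∀ x ∈ H, ∀ y ∈ H', ¬ (G.deleteEdges C).Reachable x y)

/-- The boundary of a halfspace `H` of the Θ-class `C` : vertices of `H`
incident to an edge of `C`. -/
def boundarySet (G : SimpleGraph V) (C : Set (Sym2 V)) (H : Set V) : Set V :=
  {x | x ∈ H ∧ ∃ y, G.Adj x y ∧ s(x, y) ∈ C}

/-- Orthogonality of Θ-classes: there is a common square using both. -/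
def Orthogonal (G : SimpleGraph V) (C₁ C₂ : Set (Sym2 V)) : Prop :=
  ∃ u v x y : V, IsSquare G u v x y ∧
    s(u, v) ∈ C₁ ∧ s(x, y) ∈ C₁ ∧ s(u, x) ∈ C₂ ∧ s(v, y) ∈ C₂

/-- A pairwise orthogonal family (POF) of Θ-classes. -/
def IsPOF (G : SimpleGraph V) (X : Set (Set (Sym2 V))) : Prop :=
  (∀ C ∈ X, ThetaClass G C) ∧
  ∀ C ∈ X, ∀ C' ∈ X, C ≠ C' → Orthogonal G C C'

/-- The `k`-dimensional hypercube graph, on subsets of `{1,…,k}`;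
two subsets are adjacent iff their symmetric difference has one element. -/
def cubeGraph (k : ℕ) : SimpleGraph (Finset (Fin k)) where
  Adj A B := (symmDiff A B).card = 1
  symm := by
    constructor
    intro A B h
    rwa [symmDiff_comm] at h
  loopless := by
    constructor
    intro A h
    simp [symmDiff_self] at h

/-- `S` induces a hypercube of dimension `k` in `G`. -/
def IsCubeDim (G : SimpleGraph V) (S : Set V) (k : ℕ) : Prop :=
  Nonempty ((G.induce S) ≃g cubeGraph k)

/-- `S` induces a hypercube in `G`. -/
def IsInducedCube (G : SimpleGraph V) (S : Set V) : Prop :=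
  ∃ k, IsCubeDim G S k

/-- The dimension of `G` is `d`: the largest dimension of an induced hypercube. -/
def GraphDim (G : SimpleGraph V) (d : ℕ) : Prop :=
  (∃ S : Set V, IsCubeDim G S d) ∧ ∀ (S : Set V) (k : ℕ), IsCubeDim G S k → k ≤ d

/-- The Θ-classes of the edges of the induced subgraph on `S`. -/
def cubeClasses (G : SimpleGraph V) (S : Set V) : Set (Set (Sym2 V)) :=
  {C | ThetaClass G C ∧ ∃ x ∈ S, ∃ y ∈ S, G.Adj x y ∧ s(x, y) ∈ C}

/-- With the `v₀`-orientation, `b ∈ S` is the basis of `S`: all edges of `S`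
incident to `b` are outgoing from `b`. -/
def IsBasis (G : SimpleGraph V) (v₀ : V) (S : Set V) (b : V) : Prop :=
  b ∈ S ∧ ∀ w ∈ S, G.Adj b w → G.dist v₀ b < G.dist v₀ w

/-- With the `v₀`-orientation, `b ∈ S` is the anti-basis of `S`: all edges of `S`
incident to `b` are ingoing to `b`. -/
def IsAntiBasis (G : SimpleGraph V) (v₀ : V) (S : Set V) (b : V) : Prop :=
  b ∈ S ∧ ∀ w ∈ S, G.Adj b w → G.dist v₀ w < G.dist v₀ b

/-- `ℰ⁻(v)` : the Θ-classes containing at least one edge ingoing to `v`. -/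
def inClasses (G : SimpleGraph V) (v₀ v : V) : Set (Set (Sym2 V)) :=
  {C | ThetaClass G C ∧ ∃ u, G.Adj u v ∧ G.dist v₀ u < G.dist v₀ v ∧ s(u, v) ∈ C}

/-- The ladder set `L_{u,v}`: classes of the signature `σ_{u,v}` having an
edge incident to `u`. -/
def ladder (G : SimpleGraph V) (u v : V) : Set (Set (Sym2 V)) :=
  {C | C ∈ signature G u v ∧ ∃ w, G.Adj u w ∧ s(u, w) ∈ C}

/-- A POF each of whose classes has an edge outgoing from `u`. -/
def OutgoingPOF (G : SimpleGraph V) (v₀ u : V) (L : Set (Set (Sym2 V))) : Prop :=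
  IsPOF G L ∧ ∀ C ∈ L, ∃ w, G.Adj u w ∧ G.dist v₀ u < G.dist v₀ w ∧ s(u, w) ∈ C

/-- A POF each of whose classes has an edge ingoing to `u`. -/
def IngoingPOF (G : SimpleGraph V) (v₀ u : V) (X : Set (Set (Sym2 V))) : Prop :=
  IsPOF G X ∧ ∀ C ∈ X, ∃ w, G.Adj w u ∧ G.dist v₀ w < G.dist v₀ u ∧ s(w, u) ∈ C

/-- `m` is a median of the triple `x, y, z`. -/
def IsMedian (G : SimpleGraph V) (x y z m : V) : Prop :=
  m ∈ interval G x y ∧ m ∈ interval G y z ∧ m ∈ interval G z x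

/-- `b` is the milestone following `a` on the way to `v`: `b` is the anti-basis of
the induced hypercube with basis `a` whose Θ-classes are the ladder set `L_{a,v}`. -/
def NextMilestone (G : SimpleGraph V) (v₀ v a b : V) : Prop :=
  ∃ S : Set V, IsInducedCube G S ∧ IsBasis G v₀ S a ∧ IsAntiBasis G v₀ S b ∧
    cubeClasses G S = ladder G a v

/-- The milestone set `Π(u,v)`: vertices obtained from `u` by iterating the
next-milestone step towards `v`. -/
def MilestoneSet (G : SimpleGraph V) (v₀ u v : V) : Set V :=
  {p | Relation.ReflTransGen (fun a b => NextMilestone G v₀ v a b) u p}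

/-- The penultimate milestone `π̄(u,v)`: the milestone of `Π(u,v)` other than `v`
closest to `v`, i.e. whose next milestone is `v` itself. -/
def IsPenultimate (G : SimpleGraph V) (v₀ u v p : V) : Prop :=
  p ∈ MilestoneSet G v₀ u v ∧ p ≠ v ∧ NextMilestone G v₀ v p v

/-- A convex set of vertices. -/
def ConvexSet (G : SimpleGraph V) (H : Set V) : Prop :=
  ∀ u ∈ H, ∀ v ∈ H, interval G u v ⊆ H

/-- A gated set of vertices: each vertex has a gate in `H`. -/
def GatedSet (G : SimpleGraph V) (H : Set V) : Prop :=
  ∀ x : V, ∃ g ∈ H, ∀ h ∈ H, g ∈ interval G x h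


section Aux

variable {G : SimpleGraph V}

lemma dcomm (G : SimpleGraph V) (u v : V) : G.dist u v = G.dist v u :=
  SimpleGraph.dist_comm

lemma median_unique (hm : MedianGraph G) {x y z m m' : V}
    (h : m ∈ interval G x y ∧ m ∈ interval G y z ∧ m ∈ interval G z x)
    (h' : m' ∈ interval G x y ∧ m' ∈ interval G y z ∧ m' ∈ interval G z x) :
    m = m' := by
  obtain ⟨n, -, hu⟩ := hm.2 x y z
  rw [hu m h, hu m' h']

lemma dist_zero (hm : MedianGraph G) {x y : V} (h : G.dist x y = 0) : x = y :=
  (hm.1.dist_eq_zero_iff).mp h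

lemma adj_dist (hm : MedianGraph G) {x y : V} (hxy : G.Adj x y) (u : V) :
    G.dist u y = G.dist u x + 1 ∨ G.dist u x = G.dist u y + 1 := by
  obtain ⟨m, ⟨h1, h2, h3⟩, -⟩ := hm.2 u x y
  have hxy1 : G.dist x y = 1 := SimpleGraph.dist_eq_one_iff_adj.mpr hxy
  have h2' : G.dist x m + G.dist m y = 1 := by
    have := h2; simpa [interval, hxy1] using this
  rcases Nat.eq_zero_or_pos (G.dist x m) with h0 | hpos
  · left
    have hmx : x = m := dist_zero hm h0
    subst hmx
    have h3' : G.dist y x + G.dist x u = G.dist y u := h3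
    have c1 := dcomm G y x; have c2 := dcomm G x u; have c3 := dcomm G y u
    omega
  · right
    have hmy : G.dist m y = 0 := by omega
    have hmy' : m = y := dist_zero hm hmy
    subst hmy'
    have h1' : G.dist u m + G.dist m x = G.dist u x := h1
    have c1 := dcomm G m x
    omega

lemma adj_dist_ne (hm : MedianGraph G) {x y : V} (hxy : G.Adj x y) (u : V) :
    G.dist u x ≠ G.dist u y := by
  rcases adj_dist hm hxy u with h | h <;> omega

lemma exists_adj_dist (hm : MedianGraph G) {x y : V} {n : ℕ} (h : G.dist x y = n + 1) :
    ∃ x₁, G.Adj x x₁ ∧ G.dist x₁ y = n := by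
  obtain ⟨p, hp⟩ := (hm.1 x y).exists_walk_length_eq_dist
  cases p with
  | nil => rw [h] at hp; simp at hp
  | @cons _ x₁ _ hadj q =>
    refine ⟨x₁, hadj, ?_⟩
    have hq : q.length = n := by rw [h] at hp; simpa using hp
    have h1 : G.dist x₁ y ≤ n := hq ▸ SimpleGraph.dist_le q
    have h2 : G.dist x y ≤ 1 + G.dist x₁ y := by
      calc G.dist x y ≤ G.dist x x₁ + G.dist x₁ y := hm.1.dist_triangle
        _ ≤ 1 + G.dist x₁ y := by
            have := SimpleGraph.dist_eq_one_iff_adj.mpr hadj; omega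
    omega


lemma adj_dist_one (hm : MedianGraph G) {x y : V} (hxy : G.Adj x y) : G.dist x y = 1 :=
  SimpleGraph.dist_eq_one_iff_adj.mpr hxy

/-- two distinct vertices with a common neighbor are at distance 2 -/
lemma dist_two (hm : MedianGraph G) {x y z : V} (hxy : G.Adj x y) (hyz : G.Adj y z)
    (hne : x ≠ z) : G.dist x z = 2 := by
  rcases adj_dist hm hyz x with h | h
  · rw [h, adj_dist_one hm hxy]
  · rw [adj_dist_one hm hxy] at h
    exact absurd (dist_zero hm (by omega)) hne

/-- interval between vertices at distance 2: endpoints or common neighbors -/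
lemma interval_two (hm : MedianGraph G) {x y w : V} (h2 : G.dist x y = 2)
    (hw : w ∈ interval G x y) : w = x ∨ w = y ∨ (G.Adj x w ∧ G.Adj w y) := by
  have hw' : G.dist x w + G.dist w y = 2 := by rw [interval, Set.mem_setOf_eq, h2] at hw; exact hw
  rcases Nat.lt_or_ge (G.dist x w) 1 with h0 | h1
  · left; exact (dist_zero hm (show G.dist x w = 0 by omega)).symm
  · rcases Nat.lt_or_ge (G.dist w y) 1 with h0' | h1'
    · right; left; exact dist_zero hm (by omega)
    · right; right
      constructor
      · exact SimpleGraph.dist_eq_one_iff_adj.mp (by omega)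
      · exact SimpleGraph.dist_eq_one_iff_adj.mp (by omega)

/-- square transfer: in a 4-cycle p-q-r-s-p with p≠r, q≠s, closeness to p vs q
transfers to closeness s vs r, for any reference vertex w. -/
lemma square_transfer (hm : MedianGraph G) {p q r s w : V}
    (hpq : G.Adj p q) (hqr : G.Adj q r) (hrs : G.Adj r s) (hsp : G.Adj s p)
    (hpr : p ≠ r) (hqs : q ≠ s)
    (h : G.dist w p < G.dist w q) : G.dist w s < G.dist w r := by
  have hq : G.dist w q = G.dist w p + 1 := by
    rcases adj_dist hm hpq w with h' | h' <;> omega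
  by_contra hcon
  have hs : G.dist w s = G.dist w r + 1 := by
    rcases adj_dist hm hrs w with h' | h' <;> omega
  set t := G.dist w p with ht
  have hr : G.dist w r = t ∨ G.dist w r = t + 2 := by
    rcases adj_dist hm hqr w with h' | h' <;> omega
  have hsv : G.dist w s = t + 1 ∨ G.dist w s + 1 = t := by
    rcases adj_dist hm hsp w with h' | h' <;> omega
  have hrt : G.dist w r = t ∧ G.dist w s = t + 1 := by omega
  -- two medians of (w, q, s) : p and r
  have hqs2 : G.dist q s = 2 := dist_two hm hqr hrs hqs
  have hps : G.Adj p s := hsp.symm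
  apply hpr
  apply median_unique hm (x := w) (y := q) (z := s)
  · refine ⟨?_, ?_, ?_⟩
    · show G.dist w p + G.dist p q = G.dist w q
      rw [adj_dist_one hm hpq]; omega
    · show G.dist q p + G.dist p s = G.dist q s
      rw [adj_dist_one hm hpq.symm, adj_dist_one hm hps, hqs2]
    · show G.dist s p + G.dist p w = G.dist s w
      rw [adj_dist_one hm hps.symm, dcomm G p w, dcomm G s w]; omega
  · refine ⟨?_, ?_, ?_⟩
    · show G.dist w r + G.dist r q = G.dist w q
      rw [adj_dist_one hm hqr.symm]; omega
    · show G.dist q r + G.dist r s = G.dist q s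
      rw [adj_dist_one hm hqr, adj_dist_one hm hrs, hqs2]
    · show G.dist s r + G.dist r w = G.dist s w
      rw [adj_dist_one hm hrs.symm, dcomm G r w, dcomm G s w]; omega

/-- Main induction: any edge pq crossing the cut of edge ab is "parallel" to ab
(defines the same bipartition) and is Θ-related to ab. -/
lemma cross_main (hm : MedianGraph G) :
    ∀ k : ℕ, ∀ a b p q : V, G.Adj a b → G.Adj p q → G.dist p a = k →
    G.dist p a < G.dist p b → G.dist q b < G.dist q a →
    (∀ w, G.dist w a < G.dist w b → G.dist w p < G.dist w q) ∧
    Relation.ReflTransGen (Theta0 G) s(a,b) s(p,q) := by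
  intro k
  induction k using Nat.strong_induction_on with
  | _ k IH =>
    intro a b p q hab hpq hk hp hq
    have hab1 : G.dist a b = 1 := adj_dist_one hm hab
    rcases Nat.eq_zero_or_pos k with rfl | hkpos
    · -- base case : p = a, q = b
      have hpa : p = a := (dist_zero hm hk)
      subst hpa
      have hqb : q = b := by
        have h1 : G.dist q p = 1 := adj_dist_one hm hpq.symm
        exact dist_zero hm (by omega)
      subst hqb
      constructor
      · intro w hw; exact hw
      · exact Relation.ReflTransGen.refl
    · -- inductive step
      obtain ⟨k', rfl⟩ : ∃ k', k = k' + 1 := ⟨k - 1, by omega⟩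
      have hpb : G.dist p b = k' + 2 := by
        rcases adj_dist hm hab p with h | h <;> omega
      have hqb' : G.dist q b = k' + 1 ∧ G.dist q a = k' + 2 := by
        have h1 : G.dist q b = G.dist p b + 1 ∨ G.dist p b = G.dist q b + 1 := by
          have := adj_dist hm hpq b
          rw [dcomm G b p, dcomm G b q] at this; tauto
        have h2 : G.dist q a = G.dist p a + 1 ∨ G.dist p a = G.dist q a + 1 := by
          have := adj_dist hm hpq a
          rw [dcomm G a p, dcomm G a q] at this; tauto
        omega
      obtain ⟨p₁, hpp₁, hp₁a⟩ := exists_adj_dist hm (hk : G.dist p a = k' + 1)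
      have hp₁b : G.dist p₁ b = k' + 1 := by
        have h1 : G.dist p₁ b = G.dist p b + 1 ∨ G.dist p b = G.dist p₁ b + 1 := by
          have := adj_dist hm hpp₁ b
          rw [dcomm G b p, dcomm G b p₁] at this; tauto
        have h2 : G.dist p₁ b ≤ G.dist p₁ a + G.dist a b := hm.1.dist_triangle
        omega
      have hp₁q : p₁ ≠ q := by
        intro h; rw [h] at hp₁a; omega
      have hp₁q2 : G.dist p₁ q = 2 := dist_two hm hpp₁.symm hpq hp₁q
      -- median of (p₁, q, b)
      obtain ⟨m, ⟨h1, h2, h3⟩, -⟩ := hm.2 p₁ q b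
      rcases interval_two hm hp₁q2 h1 with rfl | rfl | ⟨hadj1, hadj2⟩
      · exfalso
        have h2' : G.dist q m + G.dist m b = G.dist q b := h2
        rw [dcomm G q m, hp₁q2] at h2'
        omega
      · exfalso
        have h3' : G.dist b m + G.dist m p₁ = G.dist b p₁ := h3
        rw [dcomm G m p₁, hp₁q2, dcomm G b m, dcomm G b p₁] at h3'
        omega
      · -- m is a common neighbor of p₁ and q
        have hmb : G.dist m b = k' := by
          have h2' : G.dist q m + G.dist m b = G.dist q b := h2
          rw [dcomm G q m, adj_dist_one hm hadj2] at h2'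
          omega
        have hma : G.dist m a = k' + 1 := by
          have c1 : G.dist a q = G.dist a m + 1 ∨ G.dist a m = G.dist a q + 1 :=
            adj_dist hm hadj2 a
          have c2 : G.dist a m = G.dist a p₁ + 1 ∨ G.dist a p₁ = G.dist a m + 1 :=
            adj_dist hm hadj1 a
          have e1 := dcomm G a q; have e2 := dcomm G a m; have e3 := dcomm G a p₁
          omega
        obtain ⟨HW, HT⟩ := IH k' (by omega) a b p₁ m hab hadj1 hp₁a
          (by omega) (by omega)
        have hmp : m ≠ p := by
          intro h; rw [h] at hmb; omega
        have hsq : IsSquare G p₁ m p q :=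
          ⟨hadj1, hpq, hpp₁.symm, hadj2, hp₁q, hmp⟩
        have hstep : Theta0 G s(p₁, m) s(p, q) := ⟨p₁, m, p, q, hsq, rfl, rfl⟩
        refine ⟨?_, HT.tail hstep⟩
        intro w hw
        have hw1 : G.dist w p₁ < G.dist w m := HW w hw
        exact square_transfer hm hadj1 hadj2 hpq.symm hpp₁ hp₁q hmp hw1

/-- An edge (oriented as an existential) crossing the cut of `a b`. -/
def CrossE (G : SimpleGraph V) (a b : V) (e : Sym2 V) : Prop :=
  ∃ p q : V, e = s(p, q) ∧ G.Adj p q ∧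
    G.dist p a < G.dist p b ∧ G.dist q b < G.dist q a

lemma crossE_base (hm : MedianGraph G) {a b : V} (hab : G.Adj a b) :
    CrossE G a b s(a, b) := by
  refine ⟨a, b, rfl, hab, ?_, ?_⟩ <;>
    simp [SimpleGraph.dist_self, adj_dist_one hm hab, dcomm G b a,
      adj_dist_one hm hab.symm]

lemma W_iff (hm : MedianGraph G) {a b p q : V} (hab : G.Adj a b) (hpq : G.Adj p q)
    (hp : G.dist p a < G.dist p b) (hq : G.dist q b < G.dist q a) (w : V) :
    (G.dist w a < G.dist w b ↔ G.dist w p < G.dist w q) := by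
  constructor
  · intro hw
    exact (cross_main hm (G.dist p a) a b p q hab hpq rfl hp hq).1 w hw
  · intro hw
    have h1 : G.dist q a = G.dist p a + 1 ∧ G.dist p b = G.dist q b + 1 := by
      have c1 := adj_dist hm hpq a; have c2 := adj_dist hm hpq b
      have e1 := dcomm G a p; have e2 := dcomm G a q
      have e3 := dcomm G b p; have e4 := dcomm G b q
      omega
    have key := (cross_main hm (G.dist a p) p q a b hpq hab rfl
      (by have e1 := dcomm G a p; have e2 := dcomm G a q; omega)
      (by have e3 := dcomm G b p; have e4 := dcomm G b q; omega)).1 w hw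
    exact key

lemma theta0_crossE (hm : MedianGraph G) {a b : V} {e f : Sym2 V} (hab : G.Adj a b)
    (hc : CrossE G a b e) (h0 : Theta0 G e f) : CrossE G a b f := by
  obtain ⟨p, q, rfl, hpq, hp, hq⟩ := hc
  obtain ⟨u, v, x, y, ⟨huv, hxy, hux, hvy, huy, hvx⟩, he, hf⟩ := h0
  -- establish sides of x and y for each orientation
  rcases Sym2.eq_iff.mp he with ⟨hu, hv⟩ | ⟨hu, hv⟩
  · subst hu; subst hv
    -- u = p, v = q; x adj p, y adj q, x ≠ q, y ≠ p
    have hxp : G.Adj x p := hux.symm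
    have hyq : G.Adj y q := hvy.symm
    have hxq : G.dist x q = 2 := dist_two hm hxp hpq hvx.symm
    have hyp : G.dist y p = 2 := by
      rw [dcomm G y p]; exact dist_two hm hpq hvy huy
    have hx : G.dist x a < G.dist x b := by
      rw [W_iff hm hab hpq hp hq x, adj_dist_one hm hxp, hxq]; omega
    have hy : G.dist y b < G.dist y a := by
      have hne := adj_dist_ne hm hab y
      have := (W_iff hm hab hpq hp hq y).mp
      rw [adj_dist_one hm hyq, hyp] at this
      by_contra hcon
      have : G.dist y a < G.dist y b := by omega
      omega
    exact ⟨x, y, hf, hxy, hx, hy⟩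
  · subst hu; subst hv
    -- u = q, v = p; x adj q, y adj p
    have hxq : G.Adj x q := hux.symm
    have hyp : G.Adj y p := hvy.symm
    have hxp2 : G.dist x p = 2 := dist_two hm hxq hpq.symm hvx.symm
    have hyq2 : G.dist y q = 2 := by
      rw [dcomm G y q]; exact dist_two hm hpq.symm hvy huy
    have hy : G.dist y a < G.dist y b := by
      rw [W_iff hm hab hpq hp hq y, adj_dist_one hm hyp, hyq2]; omega
    have hx : G.dist x b < G.dist x a := by
      have hne := adj_dist_ne hm hab x
      have := (W_iff hm hab hpq hp hq x).mp
      rw [adj_dist_one hm hxq, hxp2] at this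
      by_contra hcon
      have : G.dist x a < G.dist x b := by omega
      omega
    exact ⟨y, x, by rw [hf, Sym2.eq_swap], hxy.symm, hy, hx⟩

lemma crossE_of_theta (hm : MedianGraph G) {a b : V} {f : Sym2 V} (hab : G.Adj a b)
    (ht : Relation.ReflTransGen (Theta0 G) s(a, b) f) : CrossE G a b f := by
  induction ht with
  | refl => exact crossE_base hm hab
  | tail _ h0 ih => exact theta0_crossE hm hab ih h0

lemma theta_of_crossE (hm : MedianGraph G) {a b : V} {f : Sym2 V} (hab : G.Adj a b)
    (hc : CrossE G a b f) : Relation.ReflTransGen (Theta0 G) s(a, b) f := by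
  obtain ⟨p, q, rfl, hpq, hp, hq⟩ := hc
  exact (cross_main hm (G.dist p a) a b p q hab hpq rfl hp hq).2

/-- convexity of the halfspace W(a,b) -/
lemma halfspace_convex (hm : MedianGraph G) {a b : V} (hab : G.Adj a b) :
    ∀ n : ℕ, ∀ x y z : V, G.dist x y = n →
    G.dist x a < G.dist x b → G.dist z a < G.dist z b →
    y ∈ interval G x z → G.dist y a < G.dist y b := by
  intro n
  induction n with
  | zero => intro x y z h0 hx hz _; rwa [← dist_zero hm h0]
  | succ n IH =>
    intro x y z hxy hx hz hyI
    obtain ⟨x₁, hxx₁, hx₁y⟩ := exists_adj_dist hm hxy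
    have hyI' : G.dist x y + G.dist y z = G.dist x z := hyI
    have hx₁z : G.dist x₁ z = n + G.dist y z := by
      have t1 : G.dist x₁ z ≤ G.dist x₁ y + G.dist y z := hm.1.dist_triangle
      have t2 : G.dist x z ≤ G.dist x x₁ + G.dist x₁ z := hm.1.dist_triangle
      rw [adj_dist_one hm hxx₁] at t2
      omega
    have hyI₁ : y ∈ interval G x₁ z := by
      show G.dist x₁ y + G.dist y z = G.dist x₁ z
      omega
    rcases Nat.lt_or_ge (G.dist x₁ a) (G.dist x₁ b) with hside | hside
    · exact IH x₁ y z hx₁y hside hz hyI₁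
    · exfalso
      have hside' : G.dist x₁ b < G.dist x₁ a := by
        have := adj_dist_ne hm hab x₁; omega
      have key := (cross_main hm (G.dist x a) a b x x₁ hab hxx₁ rfl hx hside').1 z hz
      have e1 := dcomm G z x; have e2 := dcomm G z x₁
      omega

/-- a vertex has at most one neighbour across edges of a fixed Θ-class -/
lemma unique_partner (hm : MedianGraph G) {x y z : V} (hxy : G.Adj x y) (hxz : G.Adj x z)
    (ht : Relation.ReflTransGen (Theta0 G) s(x, y) s(x, z)) : y = z := by
  have hc : CrossE G x y s(x, z) := crossE_of_theta hm hxy ht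
  obtain ⟨p, q, he, hpq, hp, hq⟩ := hc
  rcases Sym2.eq_iff.mp he with ⟨h1, h2⟩ | ⟨h1, h2⟩
  · -- x = p, z = q
    subst h1; subst h2
    by_contra hne
    have hyz : G.dist y z = 2 := dist_two hm hxy.symm hxz hne
    have hxI : x ∈ interval G y z := by
      show G.dist y x + G.dist x z = G.dist y z
      rw [adj_dist_one hm hxy.symm, adj_dist_one hm hxz, hyz]
    have := halfspace_convex hm hxy.symm (G.dist y x) y x z rfl
      (by rw [SimpleGraph.dist_self, adj_dist_one hm hxy.symm]; omega)
      (by exact hq) hxI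
    rw [SimpleGraph.dist_self] at this
    omega
  · -- x = q, z = p : impossible since dist x x = 0
    subst h1
    rw [SimpleGraph.dist_self] at hq
    omega

lemma theta0_symm : Symmetric (Theta0 G) := by
  rintro e f ⟨u, v, x, y, ⟨huv, hxy, hux, hvy, huy, hvx⟩, rfl, rfl⟩
  exact ⟨x, y, u, v, ⟨hxy, huv, hux.symm, hvy.symm, fun h => hvx h.symm,
    fun h => huy h.symm⟩, rfl, rfl⟩

lemma theta_symm {e f : Sym2 V} (h : Theta G e f) : Theta G f e :=
  ⟨h.2.1, h.1, by
    haveI : Std.Symm (Theta0 G) := ⟨fun a b hab => theta0_symm hab⟩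
    exact Relation.ReflTransGen.symmetric.symm _ _ h.2.2⟩

lemma theta_trans {e f g : Sym2 V} (h : Theta G e f) (h' : Theta G f g) : Theta G e g :=
  ⟨h.1, h'.2.1, h.2.2.trans h'.2.2⟩

lemma mem_class_edge {C : Set (Sym2 V)} (hC : ThetaClass G C) {f : Sym2 V}
    (hf : f ∈ C) : f ∈ G.edgeSet := by
  obtain ⟨e, he, rfl⟩ := hC
  exact hf.2.1

lemma class_rep {C : Set (Sym2 V)} (hC : ThetaClass G C) {f : Sym2 V} (hf : f ∈ C) :
    C = {g | Theta G f g} := by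
  obtain ⟨e, he, rfl⟩ := hC
  have hef : Theta G e f := hf
  ext g
  exact ⟨fun hg => theta_trans (theta_symm hef) hg, fun hg => theta_trans hef hg⟩

lemma class_eq {C C' : Set (Sym2 V)} (hC : ThetaClass G C) (hC' : ThetaClass G C')
    {f : Sym2 V} (hf : f ∈ C) (hf' : f ∈ C') : C = C' := by
  rw [class_rep hC hf, class_rep hC' hf']

lemma mem_class_of_theta0 {C : Set (Sym2 V)} (hC : ThetaClass G C) {f g : Sym2 V}
    (hf : f ∈ C) (hg : g ∈ G.edgeSet) (h0 : Theta0 G f g) : g ∈ C := by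
  rw [class_rep hC hf]
  exact ⟨mem_class_edge hC hf, hg, Relation.ReflTransGen.single h0⟩

/-- every edge of the Θ-class of `s(v,w)` crosses the cut of `(v,w)` -/
lemma class_cross (hm : MedianGraph G) {C : Set (Sym2 V)} (hC : ThetaClass G C)
    {v w : V} (hvw : G.Adj v w) (hmem : s(v, w) ∈ C) {f : Sym2 V} (hf : f ∈ C) :
    CrossE G v w f := by
  have h : Theta G s(v, w) f := by
    rw [class_rep hC hmem] at hf; exact hf
  exact crossE_of_theta hm hvw h.2.2

/-- an edge crossing the cut of a class belongs to that class -/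
lemma class_of_cross (hm : MedianGraph G) {C C' : Set (Sym2 V)}
    (hC : ThetaClass G C) (hC' : ThetaClass G C') {v w : V} (hvw : G.Adj v w)
    (hmem : s(v, w) ∈ C) {f : Sym2 V} (hf : f ∈ C') (hcross : CrossE G v w f) :
    C = C' := by
  have ht : Relation.ReflTransGen (Theta0 G) s(v, w) f := theta_of_crossE hm hvw hcross
  have : f ∈ C := by
    rw [class_rep hC hmem]
    exact ⟨G.mem_edgeSet.mpr hvw, mem_class_edge hC' hf, ht⟩
  exact class_eq hC hC' this hf

/-- an edge which does not cross a cut has both endpoints on the same side -/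
lemma notCross_same_side (hm : MedianGraph G) {a b p q : V} (hab : G.Adj a b)
    (hpq : G.Adj p q) (h : ¬ CrossE G a b s(p, q)) :
    (G.dist p a < G.dist p b ↔ G.dist q a < G.dist q b) := by
  have h1 := adj_dist_ne hm hab p
  have h2 := adj_dist_ne hm hab q
  constructor
  · intro hp
    by_contra hq
    exact h ⟨p, q, rfl, hpq, hp, by omega⟩
  · intro hq
    by_contra hp
    exact h ⟨q, p, Sym2.eq_swap, hpq.symm, hq, by omega⟩

set_option maxHeartbeats 1000000 in

/-- two orthogonal distinct Θ-classes with edges at a common vertex span a square there -/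
lemma square_at_vertex (hm : MedianGraph G) {C₁ C₂ : Set (Sym2 V)}
    (hC₁ : ThetaClass G C₁) (hC₂ : ThetaClass G C₂) (hne : C₁ ≠ C₂)
    (horth : Orthogonal G C₁ C₂) {v w₁ w₂ : V}
    (h1 : G.Adj v w₁) (he1 : s(v, w₁) ∈ C₁) (h2 : G.Adj v w₂) (he2 : s(v, w₂) ∈ C₂) :
    ∃ m, G.Adj w₁ m ∧ G.Adj w₂ m ∧ m ≠ v ∧ s(w₂, m) ∈ C₁ ∧ s(w₁, m) ∈ C₂ := by
  have hw12 : w₁ ≠ w₂ := by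
    intro h; subst h; exact hne (class_eq hC₁ hC₂ he1 he2)
  -- an edge of C₂ cannot cross cut₁ and vice versa
  have nc2 : ∀ f ∈ C₂, ¬ CrossE G v w₁ f := fun f hf hcr =>
    hne (class_of_cross hm hC₁ hC₂ h1 he1 hf hcr)
  have nc1 : ∀ f ∈ C₁, ¬ CrossE G v w₂ f := fun f hf hcr =>
    (hne (class_of_cross hm hC₂ hC₁ h2 he2 hf hcr).symm)
  -- find a vertex z on the far side of both cuts, from the orthogonality square
  obtain ⟨p, q, r, s, ⟨hpq, hrs, hpr, hqs, hps, hqr⟩, m1, m2, m3, m4⟩ := horth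
  have hz : ∃ z, G.dist z w₁ < G.dist z v ∧ G.dist z w₂ < G.dist z v := by
    -- σ₁ flips along pq and rs, constant along pr and qs;  σ₂ conversely
    have cr_pq := class_cross hm hC₁ h1 he1 m1
    have cr_rs := class_cross hm hC₁ h1 he1 m2
    have cr_pr := class_cross hm hC₂ h2 he2 m3
    have cr_qs := class_cross hm hC₂ h2 he2 m4
    have same2_pq := notCross_same_side hm (a := v) (b := w₂) h2 hpq (nc1 _ m1)
    have same2_rs := notCross_same_side hm (a := v) (b := w₂) h2 hrs (nc1 _ m2)
    have same1_pr := notCross_same_side hm (a := v) (b := w₁) h1 hpr (nc2 _ m3)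
    have same1_qs := notCross_same_side hm (a := v) (b := w₁) h1 hqs (nc2 _ m4)
    -- extract crossing info : on edge pq one endpoint is far side of cut₁ etc.
    have flip1_pq : (G.dist p v < G.dist p w₁) ↔ ¬ (G.dist q v < G.dist q w₁) := by
      obtain ⟨p', q', he, -, hp', hq'⟩ := cr_pq
      have n1 := adj_dist_ne hm h1 p
      have n2 := adj_dist_ne hm h1 q
      rcases Sym2.eq_iff.mp he with ⟨e1, e2⟩ | ⟨e1, e2⟩ <;> subst e1 <;> subst e2 <;> omega
    have flip1_rs : (G.dist r v < G.dist r w₁) ↔ ¬ (G.dist s v < G.dist s w₁) := by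
      obtain ⟨p', q', he, -, hp', hq'⟩ := cr_rs
      have n1 := adj_dist_ne hm h1 r
      have n2 := adj_dist_ne hm h1 s
      rcases Sym2.eq_iff.mp he with ⟨e1, e2⟩ | ⟨e1, e2⟩ <;> subst e1 <;> subst e2 <;> omega
    have flip2_pr : (G.dist p v < G.dist p w₂) ↔ ¬ (G.dist r v < G.dist r w₂) := by
      obtain ⟨p', q', he, -, hp', hq'⟩ := cr_pr
      have n1 := adj_dist_ne hm h2 p
      have n2 := adj_dist_ne hm h2 r
      rcases Sym2.eq_iff.mp he with ⟨e1, e2⟩ | ⟨e1, e2⟩ <;> subst e1 <;> subst e2 <;> omega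
    have flip2_qs : (G.dist q v < G.dist q w₂) ↔ ¬ (G.dist s v < G.dist s w₂) := by
      obtain ⟨p', q', he, -, hp', hq'⟩ := cr_qs
      have n1 := adj_dist_ne hm h2 q
      have n2 := adj_dist_ne hm h2 s
      rcases Sym2.eq_iff.mp he with ⟨e1, e2⟩ | ⟨e1, e2⟩ <;> subst e1 <;> subst e2 <;> omega
    have n1p := adj_dist_ne hm h1 p; have n1q := adj_dist_ne hm h1 q
    have n1r := adj_dist_ne hm h1 r; have n1s := adj_dist_ne hm h1 s
    have n2p := adj_dist_ne hm h2 p; have n2q := adj_dist_ne hm h2 q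
    have n2r := adj_dist_ne hm h2 r; have n2s := adj_dist_ne hm h2 s
    by_cases c1 : G.dist p v < G.dist p w₁ <;> by_cases c2 : G.dist p v < G.dist p w₂
    · exact ⟨s, by omega, by omega⟩
    · exact ⟨q, by omega, by omega⟩
    · exact ⟨r, by omega, by omega⟩
    · exact ⟨p, by omega, by omega⟩
  obtain ⟨z, hz1, hz2⟩ := hz
  -- the median of (w₁, w₂, z)
  obtain ⟨m, ⟨i1, i2, i3⟩, -⟩ := hm.2 w₁ w₂ z
  have hw122 : G.dist w₁ w₂ = 2 := dist_two hm h1.symm h2 hw12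
  -- m is on the far side of both cuts
  have hmf1 : G.dist m w₁ < G.dist m v := by
    exact halfspace_convex hm h1.symm (G.dist z m) z m w₁ rfl hz1
      (by rw [SimpleGraph.dist_self, adj_dist_one hm h1.symm]; omega) i3
  have hmf2 : G.dist m w₂ < G.dist m v := by
    exact halfspace_convex hm h2.symm (G.dist w₂ m) w₂ m z rfl
      (by rw [SimpleGraph.dist_self, adj_dist_one hm h2.symm]; omega) hz2 i2
  -- sides of w₁ and w₂
  have hsw1 : G.dist w₁ v < G.dist w₁ w₂ := by
    have := notCross_same_side hm (a := v) (b := w₂) h2 h1 (nc1 _ he1)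
    have e0 : G.dist v v = 0 := SimpleGraph.dist_self
    have e1 : G.dist v w₂ = 1 := adj_dist_one hm h2
    have n := adj_dist_ne hm h2 w₁
    omega
  have hsw2 : G.dist w₂ v < G.dist w₂ w₁ := by
    have := notCross_same_side hm (a := v) (b := w₁) h1 h2 (nc2 _ he2)
    have e0 : G.dist v v = 0 := SimpleGraph.dist_self
    have e1 : G.dist v w₁ = 1 := adj_dist_one hm h1
    have n := adj_dist_ne hm h1 w₂
    omega
  have hmw1 : m ≠ w₁ := by
    intro h; subst h; omega
  have hmw2 : m ≠ w₂ := by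
    intro h; subst h; omega
  rcases interval_two hm hw122 i1 with h | h | ⟨ha1, ha2⟩
  · exact absurd h hmw1
  · exact absurd h hmw2
  have hmv : m ≠ v := by
    intro h; subst h
    have : G.dist m w₁ = 1 := adj_dist_one hm h1
    have : G.dist m m = 0 := SimpleGraph.dist_self
    omega
  refine ⟨m, ha1, ha2.symm, hmv, ?_, ?_⟩
  · have hsq : IsSquare G v w₁ w₂ m := ⟨h1, ha2.symm, h2, ha1, hmv.symm, hw12⟩
    exact mem_class_of_theta0 hC₁ he1 (G.mem_edgeSet.mpr ha2.symm)
      ⟨v, w₁, w₂, m, hsq, rfl, rfl⟩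
  · have hsq : IsSquare G v w₂ w₁ m := ⟨h2, ha1, h1, ha2.symm, hmv.symm,
      fun h => hw12 h.symm⟩
    exact mem_class_of_theta0 hC₂ he2 (G.mem_edgeSet.mpr ha1)
      ⟨v, w₂, w₁, m, hsq, rfl, rfl⟩


open Classical in
/-- the neighbour of `x` across the Θ-class `C`, if any -/
noncomputable def partner (G : SimpleGraph V) (C : Set (Sym2 V)) (x : V) : V :=
  if h : ∃ w, G.Adj x w ∧ s(x, w) ∈ C then h.choose else x

lemma partner_spec {C : Set (Sym2 V)} {x : V} (h : ∃ w, G.Adj x w ∧ s(x, w) ∈ C) :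
    G.Adj x (partner G C x) ∧ s(x, partner G C x) ∈ C := by
  rw [partner, dif_pos h]
  exact h.choose_spec

lemma partner_eq (hm : MedianGraph G) {C : Set (Sym2 V)} (hC : ThetaClass G C)
    {x w : V} (hw : G.Adj x w) (hmem : s(x, w) ∈ C) : partner G C x = w := by
  have hex : ∃ w, G.Adj x w ∧ s(x, w) ∈ C := ⟨w, hw, hmem⟩
  obtain ⟨ha, hb⟩ := partner_spec hex
  have : Theta G s(x, partner G C x) s(x, w) := by
    have := class_rep hC hb
    rw [this] at hmem
    exact hmem
  exact unique_partner hm ha hw this.2.2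

open Finset in
/-- the cube spanned by a pairwise-orthogonal family of classes at `v` -/
lemma cube_map [DecidableEq (Set (Sym2 V))] (hm : MedianGraph G)
    (K : Finset (Set (Sym2 V)))
    (hth : ∀ C ∈ K, ThetaClass G C)
    (horth : ∀ C ∈ K, ∀ C' ∈ K, C ≠ C' → Orthogonal G C C')
    (v : V) (hadj : ∀ C ∈ K, ∃ w, G.Adj v w ∧ s(v, w) ∈ C) :
    ∃ g : Finset (Set (Sym2 V)) → V, g ∅ = v ∧
      ∀ B ⊆ K, ∀ C ∈ K, C ∉ B →
        G.Adj (g B) (g (insert C B)) ∧ s(g B, g (insert C B)) ∈ C := by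
  induction K using Finset.induction_on with
  | empty => exact ⟨fun _ => v, rfl, by simp⟩
  | @insert C₀ K' hC₀K' IH =>
    obtain ⟨g', hg'0, hg'⟩ := IH (fun C hC => hth C (mem_insert_of_mem hC))
      (fun C hC C' hC' h => horth C (mem_insert_of_mem hC) C' (mem_insert_of_mem hC') h)
      (fun C hC => hadj C (mem_insert_of_mem hC))
    have hC₀th : ThetaClass G C₀ := hth C₀ (mem_insert_self _ _)
    -- every vertex of the K'-cube has an edge of class C₀
    have hasC₀ : ∀ B : Finset (Set (Sym2 V)), B ⊆ K' →
        ∃ w, G.Adj (g' B) w ∧ s(g' B, w) ∈ C₀ := by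
      intro B
      induction B using Finset.induction_on with
      | empty => intro _; rw [hg'0]; exact hadj C₀ (mem_insert_self _ _)
      | @insert D B' hDB' IHB =>
        intro hsub
        have hD : D ∈ K' := hsub (mem_insert_self _ _)
        have hB' : B' ⊆ K' := (subset_insert _ _).trans hsub
        obtain ⟨w₁, hw₁, hw₁m⟩ := IHB hB'
        have hDth : ThetaClass G D := hth D (mem_insert_of_mem hD)
        have hneq : C₀ ≠ D := fun h => hC₀K' (h ▸ hD)
        have horth' : Orthogonal G C₀ D :=
          horth C₀ (mem_insert_self _ _) D (mem_insert_of_mem hD) hneq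
        obtain ⟨hadjB, hmemB⟩ := hg' B' hB' D hD hDB'
        obtain ⟨m, hm1, hm2, hmv, hc1, hc2⟩ := square_at_vertex hm hC₀th hDth hneq
          horth' hw₁ hw₁m hadjB hmemB
        exact ⟨m, hm2, hc1⟩
    refine ⟨fun B => if C₀ ∈ B then partner G C₀ (g' (B.erase C₀)) else g' B, by simp [hg'0], ?_⟩
    intro B hB D hD hDB
    by_cases hCB : C₀ ∈ B
    ·
      have hDC₀ : D ≠ C₀ := fun h => hDB (h ▸ hCB)
      have hD' : D ∈ K' := by
        rcases mem_insert.mp hD with h | h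
        · exact absurd h hDC₀
        · exact h
      have hB₀ : B.erase C₀ ⊆ K' := subset_insert_iff.mp hB
      have hDB₀ : D ∉ B.erase C₀ := fun h => hDB (mem_of_mem_erase h)
      set x := g' (B.erase C₀) with hx
      set y := g' (insert D (B.erase C₀)) with hy
      obtain ⟨hadjxy, hmemxy⟩ := hg' (B.erase C₀) hB₀ D hD' hDB₀
      obtain ⟨w₁, hw₁, hw₁m⟩ := hasC₀ (B.erase C₀) hB₀
      have hneq : C₀ ≠ D := fun h => hDC₀ h.symm
      have hDth : ThetaClass G D := hth D hD
      have horth' : Orthogonal G C₀ D := horth C₀ (mem_insert_self _ _) D hD hneq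
      obtain ⟨m, hm1, hm2, hmv, hc1, hc2⟩ := square_at_vertex hm hC₀th hDth hneq
        horth' hw₁ hw₁m hadjxy hmemxy
      have hpx : partner G C₀ x = w₁ := partner_eq hm hC₀th hw₁ hw₁m
      have hpy : partner G C₀ y = m := partner_eq hm hC₀th hm2 hc1
      have hins : (insert D B).erase C₀ = insert D (B.erase C₀) :=
        erase_insert_of_ne hDC₀
      have hCB' : C₀ ∈ insert D B := mem_insert_of_mem hCB
      simp only [if_pos hCB, if_pos hCB', hins, hpx, ← hx, ← hy, hpy]
      exact ⟨hm1, hc2⟩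
    · by_cases hDC : D = C₀
      · subst hDC
        have hB' : B ⊆ K' := by
          intro a ha
          rcases mem_insert.mp (hB ha) with h | h
          · exact absurd (h ▸ ha) hCB
          · exact h
        obtain ⟨w, hw, hwm⟩ := hasC₀ B hB'
        have hpx : partner G D (g' B) = w := partner_eq hm hC₀th hw hwm
        have hins : (insert D B).erase D = B := erase_insert hCB
        simp only [if_neg hCB, if_pos (mem_insert_self D B), hins, hpx]
        exact ⟨hw, hwm⟩
      · have hD' : D ∈ K' := by
          rcases mem_insert.mp hD with h | h
          · exact absurd h hDC
          · exact h
        have hB' : B ⊆ K' := by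
          intro a ha
          rcases mem_insert.mp (hB ha) with h | h
          · exact absurd (h ▸ ha) hCB
          · exact h
        have hCBD : C₀ ∉ insert D B := by
          intro h
          rcases mem_insert.mp h with h' | h'
          · exact hDC h'.symm
          · exact hCB h'
        simp only [if_neg hCB, if_neg hCBD]
        exact hg' B hB' D hD' hDB


open Finset in
lemma cube_sign [DecidableEq (Set (Sym2 V))] (hm : MedianGraph G)
    {K : Finset (Set (Sym2 V))} (hth : ∀ C ∈ K, ThetaClass G C) {v : V}
    {g : Finset (Set (Sym2 V)) → V} (hg0 : g ∅ = v)
    (hg : ∀ B ⊆ K, ∀ C ∈ K, C ∉ B →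
      G.Adj (g B) (g (insert C B)) ∧ s(g B, g (insert C B)) ∈ C)
    {C : Set (Sym2 V)} (hC : C ∈ K) {wC : V} (hwC : G.Adj v wC) (hwCm : s(v, wC) ∈ C) :
    ∀ B, B ⊆ K → (C ∈ B ↔ G.dist (g B) wC < G.dist (g B) v) := by
  intro B
  induction B using Finset.induction_on with
  | empty =>
    intro _
    rw [hg0]
    simp only [Finset.notMem_empty, false_iff, not_lt, SimpleGraph.dist_self]
    omega
  | @insert D B' hDB' IHB =>
    intro hsub
    have hD : D ∈ K := hsub (mem_insert_self _ _)
    have hB' : B' ⊆ K := (subset_insert _ _).trans hsub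
    obtain ⟨hadjE, hmemE⟩ := hg B' hB' D hD hDB'
    have n1 := adj_dist_ne hm hwC (g B')
    have n2 := adj_dist_ne hm hwC (g (insert D B'))
    by_cases hCD : C = D
    · subst hCD
      have hcr : CrossE G v wC s(g B', g (insert C B')) :=
        class_cross hm (hth _ hC) hwC hwCm hmemE
      obtain ⟨p, q, he, hpq', hp, hq⟩ := hcr
      have hnear : ¬ (G.dist (g B') wC < G.dist (g B') v) := by
        rw [← IHB hB']; exact hDB'
      rcases Sym2.eq_iff.mp he with ⟨e1, e2⟩ | ⟨e1, e2⟩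
      · rw [← e1] at hp
        rw [← e2] at hq
        simp only [mem_insert_self, true_iff]
        omega
      · rw [← e1] at hq
        rw [← e2] at hp
        simp only [mem_insert_self, true_iff]
        omega
    · have hnc : ¬ CrossE G v wC s(g B', g (insert D B')) := by
        intro hcr
        exact hCD (class_of_cross hm (hth C hC) (hth D hD) hwC hwCm hmemE hcr)
      have same := notCross_same_side hm hwC hadjE hnc
      have hmm : C ∈ insert D B' ↔ C ∈ B' := by
        rw [mem_insert]
        simp [hCD]
      rw [hmm, IHB hB']
      omega

open Finset in
lemma cube_adj [DecidableEq (Set (Sym2 V))] (hm : MedianGraph G)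
    {K : Finset (Set (Sym2 V))} (hth : ∀ C ∈ K, ThetaClass G C) {v : V}
    {g : Finset (Set (Sym2 V)) → V} (hg0 : g ∅ = v)
    (hg : ∀ B ⊆ K, ∀ C ∈ K, C ∉ B →
      G.Adj (g B) (g (insert C B)) ∧ s(g B, g (insert C B)) ∈ C)
    {wit : Set (Sym2 V) → V}
    (hwit : ∀ C ∈ K, G.Adj v (wit C) ∧ s(v, wit C) ∈ C)
    {B B' : Finset (Set (Sym2 V))} (hB : B ⊆ K) (hB' : B' ⊆ K)
    (hadjBB' : G.Adj (g B) (g B')) :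
    ∃ C ∈ K, symmDiff B B' = {C} ∧ s(g B, g B') ∈ C := by
  have step1 : ∀ C ∈ symmDiff B B', C ∈ K ∧ s(g B, g B') ∈ C := by
    intro C hCd
    have hCK : C ∈ K := by
      rcases mem_symmDiff.mp hCd with ⟨h, -⟩ | ⟨h, -⟩
      · exact hB h
      · exact hB' h
    refine ⟨hCK, ?_⟩
    obtain ⟨hadjw, hmemw⟩ := hwit C hCK
    have s1 := cube_sign hm hth hg0 hg hCK hadjw hmemw
    have s2 := cube_sign hm hth hg0 hg hCK hadjw hmemw
    have n1 := adj_dist_ne hm hadjw (g B)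
    have n2 := adj_dist_ne hm hadjw (g B')
    have hcr : CrossE G v (wit C) s(g B, g B') := by
      rcases mem_symmDiff.mp hCd with ⟨h1, h2⟩ | ⟨h1, h2⟩
      · have hfar : G.dist (g B) (wit C) < G.dist (g B) v := (s1 B hB).mp h1
        have hnear : ¬ (G.dist (g B') (wit C) < G.dist (g B') v) :=
          fun hh => h2 ((s2 B' hB').mpr hh)
        exact ⟨g B', g B, Sym2.eq_swap, hadjBB'.symm, by omega, by omega⟩
      · have hfar : G.dist (g B') (wit C) < G.dist (g B') v := (s2 B' hB').mp h1
        have hnear : ¬ (G.dist (g B) (wit C) < G.dist (g B) v) :=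
          fun hh => h2 ((s1 B hB).mpr hh)
        exact ⟨g B, g B', rfl, hadjBB', by omega, by omega⟩
    have ht := theta_of_crossE hm hadjw hcr
    rw [class_rep (hth C hCK) hmemw]
    exact ⟨G.mem_edgeSet.mpr hadjw, G.mem_edgeSet.mpr hadjBB', ht⟩
  have hne : symmDiff B B' ≠ ∅ := by
    intro h
    have : B = B' := by
      have := symmDiff_eq_bot.mp h
      exact this
    rw [this] at hadjBB'
    exact G.loopless.irrefl _ hadjBB'
  obtain ⟨C, hCd⟩ := Finset.nonempty_iff_ne_empty.mpr hne
  obtain ⟨hCK, hCmem⟩ := step1 C hCd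
  refine ⟨C, hCK, ?_, hCmem⟩
  ext D
  simp only [Finset.mem_singleton]
  constructor
  · intro hDd
    obtain ⟨hDK, hDmem⟩ := step1 D hDd
    exact (class_eq (hth D hDK) (hth C hCK) hDmem hCmem)
  · intro h; subst h; exact hCd

lemma symmDiff_singleton_cases [DecidableEq (Set (Sym2 V))]
    {B B' : Finset (Set (Sym2 V))} {C : Set (Sym2 V)} (h : symmDiff B B' = {C}) :
    (C ∉ B ∧ B' = insert C B) ∨ (C ∉ B' ∧ B = insert C B') := by
  have hmem : ∀ D, D ∈ symmDiff B B' ↔ D = C := by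
    intro D; rw [h]; exact Finset.mem_singleton
  have hC := (hmem C).mpr rfl
  rcases Finset.mem_symmDiff.mp hC with ⟨h1, h2⟩ | ⟨h1, h2⟩
  · right
    refine ⟨h2, ?_⟩
    ext a
    rw [Finset.mem_insert]
    constructor
    · intro ha
      by_cases hac : a = C
      · exact Or.inl hac
      · right
        by_contra hna
        exact hac ((hmem a).mp (Finset.mem_symmDiff.mpr (Or.inl ⟨ha, hna⟩)))
    · rintro (rfl | ha)
      · exact h1
      · by_contra hna
        have := (hmem a).mp (Finset.mem_symmDiff.mpr (Or.inr ⟨ha, hna⟩))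
        subst this
        exact h2 ha
  · left
    refine ⟨h2, ?_⟩
    ext a
    rw [Finset.mem_insert]
    constructor
    · intro ha
      by_cases hac : a = C
      · exact Or.inl hac
      · right
        by_contra hna
        exact hac ((hmem a).mp (Finset.mem_symmDiff.mpr (Or.inr ⟨ha, hna⟩)))
    · rintro (rfl | ha)
      · exact h1
      · by_contra hna
        have := (hmem a).mp (Finset.mem_symmDiff.mpr (Or.inl ⟨ha, hna⟩))
        subst this
        exact h2 ha


end Aux

/-- In a median graph, a POF `X` all of whose classes have an edge
incident to `v` gives rise to an induced hypercube of dimension `|X|` containing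
`v` and all the edges of classes of `X` incident to `v`, whose Θ-classes are
exactly `X`. -/
theorem pof_adjacent_to_vertex_spans_cube {V : Type*} [Fintype V]
    (G : SimpleGraph V) (hmed : MedianGraph G)
    (X : Set (Set (Sym2 V))) (hX : IsPOF G X) (v : V)
    (hadj : ∀ C ∈ X, ∃ w, G.Adj v w ∧ s(v, w) ∈ C) :
    ∃ S : Set V, IsCubeDim G S X.ncard ∧ v ∈ S ∧
      (∀ C ∈ X, ∀ w, G.Adj v w → s(v, w) ∈ C → w ∈ S) ∧
      cubeClasses G S = X := by
  classical
  have hfin : X.Finite := Set.toFinite X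
  set K : Finset (Set (Sym2 V)) := hfin.toFinset with hKdef
  have hKX : ∀ C, C ∈ K ↔ C ∈ X := fun C => hfin.mem_toFinset
  have hth : ∀ C ∈ K, ThetaClass G C := fun C hC => hX.1 C ((hKX C).mp hC)
  have horth : ∀ C ∈ K, ∀ C' ∈ K, C ≠ C' → Orthogonal G C C' :=
    fun C hC C' hC' h => hX.2 C ((hKX C).mp hC) C' ((hKX C').mp hC') h
  have hadjK : ∀ C ∈ K, ∃ w, G.Adj v w ∧ s(v, w) ∈ C :=
    fun C hC => hadj C ((hKX C).mp hC)
  obtain ⟨g, hg0, hg⟩ := cube_map hmed K hth horth v hadjK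
  -- witness edges at v
  have hadjK' : ∀ C : Set (Sym2 V), ∃ w, C ∈ K → (G.Adj v w ∧ s(v, w) ∈ C) := by
    intro C
    by_cases h : C ∈ K
    · obtain ⟨w, hw⟩ := hadjK C h
      exact ⟨w, fun _ => hw⟩
    · exact ⟨v, fun hc => absurd hc h⟩
  choose wit hwit using hadjK'
  -- injectivity of g on subsets of K
  have hinj : ∀ B ⊆ K, ∀ B' ⊆ K, g B = g B' → B = B' := by
    intro B hB B' hB' heq
    ext C
    by_cases hCK : C ∈ K
    · have s1 := cube_sign hmed hth hg0 hg hCK (hwit C hCK).1 (hwit C hCK).2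
      rw [s1 B hB, s1 B' hB', heq]
    · constructor
      · intro h; exact absurd (hB h) hCK
      · intro h; exact absurd (hB' h) hCK
  set k : ℕ := X.ncard with hk
  have hcard : K.card = k := (Set.ncard_eq_toFinset_card X hfin).symm
  have e : ↥K ≃ Fin k :=
    Fintype.equivFinOfCardEq (by rw [Fintype.card_coe]; exact hcard)
  set conv : Finset (Fin k) → Finset (Set (Sym2 V)) :=
    fun A => A.image (fun i => ((e.symm i : ↥K) : Set (Sym2 V))) with hconv
  have hef : Function.Injective (fun i : Fin k => ((e.symm i : ↥K) : Set (Sym2 V))) :=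
    fun i j h => e.symm.injective (Subtype.ext h)
  have hconv_sub : ∀ A, conv A ⊆ K := by
    intro A C hC
    obtain ⟨i, -, rfl⟩ := Finset.mem_image.mp hC
    exact (e.symm i).2
  have hconv_inj : Function.Injective conv := by
    intro A B h
    ext i
    constructor
    · intro hi
      have : ((e.symm i : ↥K) : Set (Sym2 V)) ∈ conv B := by
        rw [← h]; exact Finset.mem_image_of_mem _ hi
      obtain ⟨j, hj, hji⟩ := Finset.mem_image.mp this
      rwa [← hef hji]
    · intro hi
      have : ((e.symm i : ↥K) : Set (Sym2 V)) ∈ conv A := by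
        rw [h]; exact Finset.mem_image_of_mem _ hi
      obtain ⟨j, hj, hji⟩ := Finset.mem_image.mp this
      rwa [← hef hji]
  have hconv_sd : ∀ A B, symmDiff (conv A) (conv B) = (symmDiff A B).image
      (fun i => ((e.symm i : ↥K) : Set (Sym2 V))) := by
    intro A B
    exact (Finset.image_symmDiff A B hef).symm
  set φ : Finset (Fin k) → V := fun A => g (conv A) with hφ
  have hφinj : Function.Injective φ := by
    intro A B h
    exact hconv_inj (hinj (conv A) (hconv_sub A) (conv B) (hconv_sub B) h)
  set S : Set V := Set.range φ with hS
  -- adjacency characterization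
  have key : ∀ A B : Finset (Fin k), G.Adj (φ A) (φ B) ↔ (symmDiff A B).card = 1 := by
    intro A B
    constructor
    · intro h
      obtain ⟨C, hCK, hsd, -⟩ := cube_adj hmed hth hg0 hg
        (fun C hC => hwit C hC) (hconv_sub A) (hconv_sub B) h
      have : (symmDiff (conv A) (conv B)).card = 1 := by rw [hsd]; simp
      rw [hconv_sd, Finset.card_image_of_injective _ hef] at this
      exact this
    · intro h
      obtain ⟨i, hi⟩ := Finset.card_eq_one.mp h
      have hsd : symmDiff (conv A) (conv B) = {((e.symm i : ↥K) : Set (Sym2 V))} := by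
        rw [hconv_sd, hi]; simp
      have hCK : ((e.symm i : ↥K) : Set (Sym2 V)) ∈ K := (e.symm i).2
      rcases symmDiff_singleton_cases hsd with ⟨hnm, hins⟩ | ⟨hnm, hins⟩
      · have := (hg (conv A) (hconv_sub A) _ hCK hnm).1
        rw [← hins] at this
        exact this
      · have := (hg (conv B) (hconv_sub B) _ hCK hnm).1
        rw [← hins] at this
        exact this.symm
  have hvS : v ∈ S := ⟨∅, by simp [hφ, hconv, hg0]⟩
  -- the vertex g {C} for C ∈ K
  have hedgeC : ∀ C (hCK : C ∈ K), G.Adj v (g {C}) ∧ s(v, g {C}) ∈ C := by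
    intro C hCK
    have := hg ∅ (Finset.empty_subset K) C hCK (Finset.notMem_empty C)
    rw [hg0] at this
    simpa using this
  have hgCS : ∀ C (hCK : C ∈ K), g {C} ∈ S := by
    intro C hCK
    refine ⟨{e ⟨C, hCK⟩}, ?_⟩
    show g (conv {e ⟨C, hCK⟩}) = g {C}
    congr 1
    rw [hconv]
    simp
  refine ⟨S, ?_, hvS, ?_, ?_⟩
  · -- IsCubeDim
    refine ⟨?_⟩
    have iso0 : cubeGraph k ≃g (G.induce S) := by
      refine ⟨Equiv.ofInjective φ hφinj, ?_⟩
      intro A B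
      show G.Adj (φ A) (φ B) ↔ (symmDiff A B).card = 1
      exact key A B
    exact iso0.symm
  · -- partner closure
    intro C hC w hvw hmem
    have hCK : C ∈ K := (hKX C).mpr hC
    obtain ⟨hadjC, hmemC⟩ := hedgeC C hCK
    have ht : Relation.ReflTransGen (Theta0 G) s(v, w) s(v, g {C}) := by
      have h1 : s(v, g {C}) ∈ {f | Theta G s(v, w) f} := by
        rw [← class_rep (hth C hCK) hmem]
        exact hmemC
      exact h1.2.2
    have := unique_partner hmed hvw hadjC ht
    rw [this]
    exact hgCS C hCK
  · -- cubeClasses = X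
    ext C'
    constructor
    · rintro ⟨hθ', x, hxS, y, hyS, hxy, hmem⟩
      obtain ⟨A, rfl⟩ := hxS
      obtain ⟨B, rfl⟩ := hyS
      obtain ⟨C, hCK, -, hmemC⟩ := cube_adj hmed hth hg0 hg
        (fun C hC => hwit C hC) (hconv_sub A) (hconv_sub B) hxy
      rw [class_eq hθ' (hth C hCK) hmem hmemC]
      exact (hKX C).mp hCK
    · intro hC
      have hCK : C' ∈ K := (hKX C').mpr hC
      obtain ⟨hadjC, hmemC⟩ := hedgeC C' hCK
      exact ⟨hth C' hCK, v, hvS, g {C'}, hgCS C' hCK, hadjC, hmemC⟩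


end MedianPaper
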